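/- Let f, g be coprime polynomials over a field K of characteristic zero, g nonzero, and let p₀, ..., p_d, p ∈ K[n] with p₀, p_d nonzero, such that ∑_{m=0}^{d} p_m(n)·f(n+m)·∏_{j≠m, 0≤j≤d} g(n+j) = p(n)·∏_{j=0}^{d} g(n+j). Then g(n) divides p₀(n)·lcm(g(n+1), g(n+2), ..., g(n+d)). -/

import Mathlib

open Polynomial Finset

/-- From the cleared-denominator form of the linear difference equation,
`g(n)` divides `p₀(n)·lcm(g(n+1), …, g(n+d))`. -/
theorem denominator_divides_p0_lcm {K : Type*} [Field K] [CharZero K] [DecidableEq K]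
    (d : ℕ) (p : ℕ → K[X]) (q f g : K[X])
    (hp0 : p 0 ≠ 0) (hpd : p d ≠ 0) (hg : g ≠ 0) (hfg : IsCoprime f g)
    (heq : ∑ m ∈ range (d + 1),
        p m * f.comp (X + C (m : K)) *
          ∏ j ∈ (range (d + 1)).erase m, g.comp (X + C (j : K))
      = q * ∏ j ∈ range (d + 1), g.comp (X + C (j : K))) :
    g ∣ p 0 * (Finset.Icc 1 d).lcm (fun j => g.comp (X + C (j : K))) := by
  classical
  by_cases hf : f = 0
  · subst hf
    exact ((isCoprime_zero_left).mp hfg).dvd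
  set s : Finset ℕ := range (d + 1) with hs
  have h0s : 0 ∈ s := by simp [hs]
  set G : ℕ → K[X] := fun j => g.comp (X + C (j : K)) with hGdef
  set T : ℕ → K[X] := fun m =>
    p m * f.comp (X + C (m : K)) * ∏ j ∈ s.erase m, G j with hTdef
  have heq' : ∑ m ∈ s, T m = q * ∏ j ∈ s, G j := heq
  have hGne : ∀ j, G j ≠ 0 := fun j => comp_X_add_C_ne_zero_iff.mpr hg
  have hcomp0 : ∀ h : K[X], h.comp (X + C ((0 : ℕ) : K)) = h := by
    intro h; simp
  set L := (Finset.Icc 1 d).lcm G with hLdef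
  have hLne : L ≠ 0 := by
    rw [hLdef, Ne, Finset.lcm_eq_zero_iff]
    rintro ⟨j, hj, h0⟩
    exact hGne j h0
  have hP0L : p 0 * L ≠ 0 := mul_ne_zero hp0 hLne
  rw [UniqueFactorizationMonoid.dvd_iff_normalizedFactors_le_normalizedFactors hg hP0L,
    Multiset.le_iff_count]
  intro r
  by_cases hr : r ∈ UniqueFactorizationMonoid.normalizedFactors g
  swap
  · simp [Multiset.count_eq_zero_of_notMem hr]
  have hrp : Prime r := UniqueFactorizationMonoid.prime_of_normalized_factor r hr
  have hrn : normalize r = r := UniqueFactorizationMonoid.normalize_normalized_factor r hr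
  -- auxiliary facts about emultiplicities
  have hrg : r ∣ g := UniqueFactorizationMonoid.dvd_of_mem_normalizedFactors hr
  have hef : emultiplicity r f = 0 :=
    emultiplicity_eq_zero.mpr fun h => hrp.not_unit (hfg.isUnit_of_dvd' h hrg)
  have haj : ∀ j, emultiplicity r (G j) ≠ ⊤ := fun j =>
    finiteMultiplicity_iff_emultiplicity_ne_top.1
      (FiniteMultiplicity.of_not_isUnit hrp.not_isUnit (hGne j))
  have hsumne : ∀ t : Finset ℕ, ∑ j ∈ t, emultiplicity r (G j) ≠ ⊤ := by
    intro t
    rw [ENat.sum_ne_top]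
    exact fun j _ => haj j
  have hep0 : emultiplicity r (p 0) ≠ ⊤ :=
    finiteMultiplicity_iff_emultiplicity_ne_top.1
      (FiniteMultiplicity.of_not_isUnit hrp.not_isUnit hp0)
  have hT0 : emultiplicity r (T 0)
      = emultiplicity r (p 0) + ∑ j ∈ s.erase 0, emultiplicity r (G j) := by
    rw [hTdef]
    simp only
    rw [emultiplicity_mul hrp, emultiplicity_mul hrp, Finset.emultiplicity_prod hrp,
      hcomp0 f, hef, add_zero]
  have hkne : emultiplicity r (T 0) ≠ ⊤ := by
    rw [hT0]
    exact WithTop.add_ne_top.mpr ⟨hep0, hsumne _⟩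
  obtain ⟨k, hk0⟩ := WithTop.ne_top_iff_exists.mp hkne
  have hk : (k : ℕ∞) = emultiplicity r (T 0) := by exact_mod_cast hk0
  -- the key inequality
  have key : emultiplicity r g ≤ emultiplicity r (p 0 * L) := by
    by_cases hcase : ∀ m ∈ s.erase 0, ((k : ℕ∞) + 1) ≤ emultiplicity r (T m)
    · -- the term for m = 0 has strictly smaller multiplicity than all others
      have hdvd : r ^ (k + 1) ∣ ∑ m ∈ s.erase 0, T m :=
        Finset.dvd_sum fun m hm =>
          pow_dvd_of_le_emultiplicity (by push_cast; exact hcase m hm)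
      have hsplit : T 0 + ∑ m ∈ s.erase 0, T m = q * ∏ j ∈ s, G j := by
        rw [Finset.add_sum_erase s T h0s]; exact heq'
      have hnotRHS : ¬ r ^ (k + 1) ∣ q * ∏ j ∈ s, G j := by
        intro hdq
        have hT0dvd : r ^ (k + 1) ∣ T 0 := by
          have : T 0 = q * ∏ j ∈ s, G j - ∑ m ∈ s.erase 0, T m :=
            eq_sub_of_add_eq hsplit
          rw [this]
          exact dvd_sub hdq hdvd
        have := le_emultiplicity_of_pow_dvd hT0dvd
        rw [← hk] at this
        have h2 : ((k : ℕ∞)) < (k : ℕ∞) + 1 := by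
          exact (ENat.lt_add_one_iff (by simp)).mpr le_rfl
        exact absurd this (by push_cast; exact h2.not_ge)
      have hRHSle : emultiplicity r (q * ∏ j ∈ s, G j) ≤ (k : ℕ∞) := by
        by_contra hle
        push_neg at hle
        exact hnotRHS (pow_dvd_of_le_emultiplicity
          (by push_cast; exact Order.add_one_le_of_lt hle))
      have hprodle : emultiplicity r (G 0) + ∑ j ∈ s.erase 0, emultiplicity r (G j)
          ≤ (k : ℕ∞) := by
        refine le_trans ?_ hRHSle
        rw [emultiplicity_mul hrp, Finset.emultiplicity_prod hrp,
          ← Finset.add_sum_erase s _ h0s]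
        exact le_add_self
      rw [hk, hT0] at hprodle
      have hG0 : emultiplicity r (G 0) ≤ emultiplicity r (p 0) :=
        (WithTop.add_le_add_iff_right (hsumne _)).mp hprodle
      have : emultiplicity r g ≤ emultiplicity r (p 0) := by
        rw [hGdef] at hG0
        simp only at hG0
        rwa [hcomp0 g] at hG0
      exact this.trans
        (emultiplicity_le_emultiplicity_of_dvd_right (dvd_mul_right _ _))
    · -- some other term has multiplicity at most that of the term for m = 0
      push_neg at hcase
      obtain ⟨m, hm, hlt⟩ := hcase
      have hm0 : m ≠ 0 := (Finset.mem_erase.mp hm).1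
      have hms : m ∈ s := (Finset.mem_erase.mp hm).2
      have hmd : m ∈ Finset.Icc 1 d := by
        rw [Finset.mem_Icc]
        have := Finset.mem_range.mp (hs ▸ hms)
        omega
      have hTm : emultiplicity r (T m) ≤ (k : ℕ∞) := Order.le_of_lt_add_one hlt
      have hdvd2 : (∏ j ∈ s.erase m, G j) ∣ T m := dvd_mul_left _ _
      have h1 : ∑ j ∈ s.erase m, emultiplicity r (G j) ≤ (k : ℕ∞) := by
        rw [← Finset.emultiplicity_prod hrp]
        exact (emultiplicity_le_emultiplicity_of_dvd_right hdvd2).trans hTm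
      have h0m : 0 ∈ s.erase m := Finset.mem_erase.mpr ⟨Ne.symm hm0, h0s⟩
      rw [← Finset.add_sum_erase _ _ h0m, Finset.erase_right_comm] at h1
      have hk' : (k : ℕ∞) = (emultiplicity r (p 0) + emultiplicity r (G m))
          + ∑ j ∈ (s.erase 0).erase m, emultiplicity r (G j) := by
        rw [hk, hT0, ← Finset.add_sum_erase _ _ hm, add_assoc]
      rw [hk'] at h1
      have hG0 : emultiplicity r (G 0)
          ≤ emultiplicity r (p 0) + emultiplicity r (G m) :=
        (WithTop.add_le_add_iff_right (hsumne _)).mp h1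
      have hGm : emultiplicity r (G m) ≤ emultiplicity r L :=
        emultiplicity_le_emultiplicity_of_dvd_right (hLdef ▸ Finset.dvd_lcm hmd)
      have : emultiplicity r g ≤ emultiplicity r (p 0) + emultiplicity r L := by
        refine le_trans ?_ (add_le_add le_rfl hGm)
        rw [hGdef] at hG0
        simp only at hG0
        rwa [hcomp0 g] at hG0
      rwa [← emultiplicity_mul hrp] at this
  rw [UniqueFactorizationMonoid.emultiplicity_eq_count_normalizedFactors hrp.irreducible hg,
    UniqueFactorizationMonoid.emultiplicity_eq_count_normalizedFactors hrp.irreducible hP0L,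
    hrn] at key
  exact_mod_cast key
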